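/- Let a boundary compactification model of a group G on a compact Hausdorff space X be given. Let p ∈ Y = X ∖ ι(G) be a bounded parabolic point of the action of G on X and assume p is not an isolated point of X. Then ∂(Stab p) = {p}, i.e. closure(ι(Stab p)) ∩ Y = {p} (equivalently, closure(ι(Stab p)) = ι(Stab p) ∪ {p}). -/

import Mathlib

open Pointwise Topology

/-- A *boundary compactification model* of a group `G` on a space `X` carrying an
action of `G`: an injective map `emb : G → X` with open range, discrete in the
subspace topology, such that the action extends the left multiplication of `G`. -/
structure BoundaryModel (G X : Type*) [Group G] [TopologicalSpace X]
    [MulAction G X] where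
  emb : G → X
  inj : Function.Injective emb
  open_range : IsOpen (Set.range emb)
  discrete_range : ∀ g : G, ∃ U : Set X, IsOpen U ∧ U ∩ Set.range emb = {emb g}
  smul_emb : ∀ g h : G, g • emb h = emb (g * h)

/-- A point `p` of a `G`-space `W` is *bounded parabolic* if its stabilizer acts
properly discontinuously and cocompactly on `W ∖ {p}`. -/
def BoundedParabolic (G : Type*) {W : Type*} [Group G] [TopologicalSpace W]
    [MulAction G W] (p : W) : Prop :=
  (∀ K L : Set W, IsCompact K → IsCompact L → p ∉ K → p ∉ L →
      {g : G | g ∈ MulAction.stabilizer G p ∧ ((g • K) ∩ L).Nonempty}.Finite) ∧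
  ∃ K : Set W, IsCompact K ∧ p ∉ K ∧ (⋃ g ∈ MulAction.stabilizer G p, g • K) = {p}ᶜ

/-- In a boundary compactification model of `G` on a compact
Hausdorff space `X`, if `p ∈ Y = X ∖ emb(G)` is a bounded parabolic point that is not
isolated in `X`, then `∂(Stab p) = {p}`. -/
theorem bd_stabilizer_of_boundedParabolic {G X : Type*} [Group G]
    [TopologicalSpace X] [CompactSpace X] [T2Space X]
    [MulAction G X] [ContinuousConstSMul G X]
    (M : BoundaryModel G X) (p : X) (hp : p ∉ Set.range M.emb)
    (hbp : BoundedParabolic G p) (hiso : ¬IsOpen ({p} : Set X)) :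
    closure (M.emb '' (MulAction.stabilizer G p : Set G)) ∩ (Set.range M.emb)ᶜ
      = {p} := by
  set S : Set G := (MulAction.stabilizer G p : Set G)
  set A : Set X := M.emb '' S
  -- Step A: any point of the intersection equals p.
  have stepA : ∀ q, q ∈ closure A → q ∉ Set.range M.emb → q = p := by
    intro q hqc hqr
    by_contra hqp
    -- choose a compact nbhd L of q avoiding p
    obtain ⟨L, hLc, hqL, hLp⟩ := exists_compact_subset (isOpen_compl_singleton (x := p))
      (by simpa using hqp)
    have hpL : p ∉ L := fun h => hLp h rfl
    -- proper discontinuity with K = {emb 1}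
    have hK : IsCompact ({M.emb 1} : Set X) := isCompact_singleton
    have hpK : p ∉ ({M.emb 1} : Set X) := by
      intro h
      exact hp (by rw [Set.mem_singleton_iff.mp h]; exact ⟨1, rfl⟩)
    have hT := hbp.1 {M.emb 1} L hK hLc hpK hpL
    -- A ∩ L is finite
    have hfin : (A ∩ L).Finite := by
      refine (hT.image M.emb).subset ?_
      rintro x ⟨⟨s, hs, rfl⟩, hxL⟩
      refine ⟨s, ⟨hs, ⟨M.emb s, ?_, hxL⟩⟩, rfl⟩
      refine ⟨M.emb 1, rfl, ?_⟩
      show s • M.emb 1 = M.emb s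
      rw [M.smul_emb, mul_one]
    -- q is in the closure of A ∩ interior L, hence in the finite closed set A ∩ L
    have hq' : q ∈ closure (A ∩ interior L) := by
      have := (isOpen_interior (s := L)).inter_closure (t := A) ⟨hqL, hqc⟩
      simpa [Set.inter_comm] using this
    have hq'' : q ∈ A ∩ L := by
      have hcl : closure (A ∩ interior L) ⊆ A ∩ L := by
        have : (A ∩ L).Finite := hfin
        have hclosed : IsClosed (A ∩ L) := this.isClosed
        exact hclosed.closure_subset_iff.mpr
          (Set.inter_subset_inter_right A interior_subset)
      exact hcl hq'
    exact hqr ⟨_, (hq''.1.choose_spec.2 : M.emb _ = q)⟩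
  -- Step B: S is infinite
  have hSinf : S.Infinite := by
    intro hSfin
    obtain ⟨K, hKc, hpK, hcov⟩ := hbp.2
    have hcomp : IsCompact (⋃ g ∈ S, g • K) :=
      hSfin.isCompact_biUnion (fun g _ => hKc.smul g)
    have hcomp' : IsCompact ({p}ᶜ : Set X) := by
      have heq : (⋃ g ∈ S, g • K) = {p}ᶜ := hcov
      rwa [heq] at hcomp
    have : IsClosed ({p}ᶜ : Set X) := hcomp'.isClosed
    exact hiso (by simpa using this.isOpen_compl)
  -- Step C: A has an accumulation point q, necessarily outside range emb
  have hAinf : A.Infinite := hSinf.image (M.inj.injOn)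
  obtain ⟨q, hq⟩ := hAinf.exists_accPt_principal
  have hqr : q ∉ Set.range M.emb := by
    rintro ⟨g, rfl⟩
    obtain ⟨U, hUo, hU⟩ := M.discrete_range g
    have hUm : U ∈ 𝓝 (M.emb g) := hUo.mem_nhds (by
      have : M.emb g ∈ ({M.emb g} : Set X) := rfl
      rw [← hU] at this; exact this.1)
    obtain ⟨y, ⟨hyU, hyA⟩, hyne⟩ := accPt_iff_nhds.mp hq U hUm
    have : y ∈ U ∩ Set.range M.emb := ⟨hyU, hyA.choose_spec.2 ▸ ⟨_, rfl⟩⟩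
    rw [hU] at this
    exact hyne this
  have hqc : q ∈ closure A := by
    exact mem_closure_iff_clusterPt.mpr hq.clusterPt
  have hqp : q = p := stepA q hqc hqr
  -- conclude
  apply Set.eq_singleton_iff_unique_mem.mpr
  constructor
  · exact ⟨hqp ▸ hqc, hp⟩
  · intro x ⟨hx1, hx2⟩
    exact stepA x hx1 hx2
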